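/- Let h : [β,γ] → ℝ be C¹ and convex (or concave) with |h'(y)| ≥ λ > 0 for all y ∈ [β,γ]. Then there exists an absolute constant C > 0, independent of λ, β, γ and h, such that |∫_β^γ e^{i h(y)} dy| ≤ C/λ. -/

import Mathlib

open intervalIntegral MeasureTheory Set

lemma key_lemma (ψ : ℝ → ℝ) (f : ℝ → ℂ) (a b M A : ℝ) (hab : a ≤ b) (hM : 0 ≤ M)
    (hmono : Monotone ψ ∨ Antitone ψ)
    (hψ0 : ∀ y, 0 ≤ ψ y) (hψM : ∀ y, ψ y ≤ M)
    (hf : ContinuousOn f (Icc a b))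
    (hbound : ∀ c d, c ∈ Icc a b → d ∈ Icc a b → ‖∫ y in c..d, f y‖ ≤ A) :
    ‖∫ y in a..b, ψ y • f y‖ ≤ M * A := by
  have hψmeas : Measurable ψ := hmono.elim Monotone.measurable Antitone.measurable
  set μ := volume.restrict (Ioc a b) with hμ
  set ν := volume.restrict (Ioc 0 M) with hν
  have hμfin : IsFiniteMeasure μ := by
    constructor
    rw [hμ, Measure.restrict_apply_univ, Real.volume_Ioc]
    exact ENNReal.ofReal_lt_top
  have hνfin : IsFiniteMeasure ν := by
    constructor
    rw [hν, Measure.restrict_apply_univ, Real.volume_Ioc]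
    exact ENNReal.ofReal_lt_top
  set g : ℝ → ℝ → ℂ := fun y t => if t < ψ y then f y else 0 with hg
  -- Integrability on the product
  have hSmeas : MeasurableSet {p : ℝ × ℝ | p.2 < ψ p.1} :=
    measurableSet_lt measurable_snd (hψmeas.comp measurable_fst)
  have huncurry : Function.uncurry g = ({p : ℝ × ℝ | p.2 < ψ p.1}).indicator (fun p => f p.1) := by
    funext p
    simp only [Function.uncurry, hg, Set.indicator_apply, Set.mem_setOf_eq]
  obtain ⟨K, hK⟩ := isCompact_Icc.exists_bound_of_continuousOn hf
  have hint : Integrable (Function.uncurry g) (μ.prod ν) := by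
    constructor
    · rw [huncurry]
      apply AEStronglyMeasurable.indicator _ hSmeas
      rw [hμ, hν, Measure.prod_restrict]
      have h1 : AEStronglyMeasurable (fun p : ℝ × ℝ => f p.1)
          ((volume.prod volume).restrict (Icc a b ×ˢ (univ : Set ℝ))) := by
        apply ContinuousOn.aestronglyMeasurable
        · exact hf.comp continuous_fst.continuousOn (fun p hp => hp.1)
        · exact measurableSet_Icc.prod MeasurableSet.univ
      exact h1.mono_measure (Measure.restrict_mono
        (Set.prod_mono Ioc_subset_Icc_self (subset_univ _)) le_rfl)
    · have : IsFiniteMeasure (μ.prod ν) := by infer_instance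
      apply HasFiniteIntegral.of_bounded (C := K)
      rw [hμ, hν, Measure.prod_restrict]
      filter_upwards [ae_restrict_mem ((measurableSet_Ioc.prod measurableSet_Ioc))] with p hp
      rw [huncurry]
      calc ‖({p : ℝ × ℝ | p.2 < ψ p.1}).indicator (fun p => f p.1) p‖
          ≤ ‖f p.1‖ := norm_indicator_le_norm_self _ _
        _ ≤ K := hK _ (Ioc_subset_Icc_self hp.1)
  have hswap := MeasureTheory.integral_integral_swap hint
  -- LHS : inner integral in t
  have hLHS : ∀ y : ℝ, ∫ t, g y t ∂ν = ψ y • f y := by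
    intro y
    have h1 : (fun t => g y t) = (Iio (ψ y)).indicator (fun _ => f y) := by
      funext t
      simp only [hg, Set.indicator_apply, Set.mem_Iio]
    rw [h1, MeasureTheory.integral_indicator measurableSet_Iio, hν,
      Measure.restrict_restrict measurableSet_Iio]
    have h2 : Iio (ψ y) ∩ Ioc 0 M = Ioo 0 (ψ y) := by
      ext t
      constructor
      · rintro ⟨ht1, ht2, _⟩; exact ⟨ht2, ht1⟩
      · rintro ⟨ht1, ht2⟩; exact ⟨ht2, ht1, le_trans (le_of_lt ht2) (hψM y)⟩
    rw [h2, setIntegral_const, Real.volume_real_Ioo_of_le (hψ0 y), sub_zero]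
  -- RHS : each inner integral in y is bounded by A
  have hRHS : ∀ t : ℝ, ‖∫ y, g y t ∂μ‖ ≤ A := by
    intro t
    have h1 : (fun y => g y t) = ({y | t < ψ y}).indicator f := by
      funext y
      simp only [hg, Set.indicator_apply, Set.mem_setOf_eq]
    have hmeaslevel : MeasurableSet {y | t < ψ y} := measurableSet_lt measurable_const hψmeas
    rw [h1, MeasureTheory.integral_indicator hmeaslevel, hμ,
      Measure.restrict_restrict hmeaslevel]
    set S := {y | t < ψ y} ∩ Ioc a b with hS
    rcases hmono with hmon | hant
    · -- monotone : S is a right-interval (c, b]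
      set c := sInf (insert b S) with hc
      have hbdd : BddBelow (insert b S) := ⟨a, by
        rintro y (rfl | hy)
        · exact hab
        · exact le_of_lt hy.2.1⟩
      have hne : (insert b S).Nonempty := ⟨b, mem_insert _ _⟩
      have hca : a ≤ c := le_csInf hne (by
        rintro y (rfl | hy)
        · exact hab
        · exact le_of_lt hy.2.1)
      have hcb : c ≤ b := csInf_le hbdd (mem_insert _ _)
      have hsub1 : S ⊆ Icc c b := fun y hy =>
        ⟨csInf_le hbdd (mem_insert_of_mem _ hy), hy.2.2⟩
      have hsub2 : Ioo c b ⊆ S := by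
        rintro z ⟨hz1, hz2⟩
        obtain ⟨y, hy, hyz⟩ := exists_lt_of_csInf_lt hne hz1
        rcases hy with rfl | hy
        · exact absurd (lt_trans hyz hz2) (lt_irrefl _)
        · exact ⟨lt_of_lt_of_le hy.1 (hmon (le_of_lt hyz)),
            lt_trans hy.2.1 hyz, le_of_lt hz2⟩
      have hae : S =ᶠ[ae volume] Ioc c b := by
        rw [MeasureTheory.ae_eq_set]
        constructor
        · apply measure_mono_null (t := {c}) _ Real.volume_singleton
          intro y hy
          have h3 := hsub1 hy.1
          have : ¬(c < y) := fun hlt => hy.2 ⟨hlt, h3.2⟩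
          simp [le_antisymm (not_lt.mp this) h3.1]
        · apply measure_mono_null (t := {b}) _ Real.volume_singleton
          intro y hy
          have : ¬(y < b) := fun hlt => hy.2 (hsub2 ⟨hy.1.1, hlt⟩)
          simp [le_antisymm hy.1.2 (not_lt.mp this)]
      rw [setIntegral_congr_set hae, ← intervalIntegral.integral_of_le hcb]
      exact hbound c b ⟨hca, hcb⟩ ⟨hab, le_refl b⟩
    · -- antitone : S is a left-interval [a, c)
      set c := sSup (insert a S) with hc
      have hbdd : BddAbove (insert a S) := ⟨b, by
        rintro y (rfl | hy)
        · exact hab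
        · exact hy.2.2⟩
      have hne : (insert a S).Nonempty := ⟨a, mem_insert _ _⟩
      have hca : a ≤ c := le_csSup hbdd (mem_insert _ _)
      have hcb : c ≤ b := csSup_le hne (by
        rintro y (rfl | hy)
        · exact hab
        · exact hy.2.2)
      have hsub1 : S ⊆ Ioc a c := fun y hy =>
        ⟨hy.2.1, le_csSup hbdd (mem_insert_of_mem _ hy)⟩
      have hsub2 : Ioo a c ⊆ S := by
        rintro z ⟨hz1, hz2⟩
        obtain ⟨y, hy, hyz⟩ := exists_lt_of_lt_csSup hne hz2
        rcases hy with rfl | hy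
        · exact absurd (lt_trans hz1 hyz) (lt_irrefl _)
        · exact ⟨lt_of_lt_of_le hy.1 (hant (le_of_lt hyz)),
            hz1, le_trans (le_of_lt hyz) hy.2.2⟩
      have hae : S =ᶠ[ae volume] Ioc a c := by
        rw [MeasureTheory.ae_eq_set]
        constructor
        · apply measure_mono_null (t := (∅ : Set ℝ)) _ measure_empty
          intro y hy
          exact absurd (hsub1 hy.1) hy.2
        · apply measure_mono_null (t := {c}) _ Real.volume_singleton
          intro y hy
          have : ¬(y < c) := fun hlt => hy.2 (hsub2 ⟨hy.1.1, hlt⟩)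
          simp [le_antisymm hy.1.2 (not_lt.mp this)]
      rw [setIntegral_congr_set hae, ← intervalIntegral.integral_of_le hca]
      exact hbound a c ⟨le_refl a, hab⟩ ⟨hca, hcb⟩
  -- put together
  have hA0 : 0 ≤ A := le_trans (norm_nonneg _) (hbound a a ⟨le_refl a, hab⟩ ⟨le_refl a, hab⟩)
  calc ‖∫ y in a..b, ψ y • f y‖
      = ‖∫ y, ψ y • f y ∂μ‖ := by rw [intervalIntegral.integral_of_le hab]
    _ = ‖∫ y, ∫ t, g y t ∂ν ∂μ‖ := by
        congr 1
        exact (integral_congr_ae (Filter.Eventually.of_forall fun y => (hLHS y).symm))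
    _ = ‖∫ t, ∫ y, g y t ∂μ ∂ν‖ := by rw [hswap]
    _ ≤ A * (ν univ).toReal := by
        apply MeasureTheory.norm_integral_le_of_norm_le_const
        exact Filter.Eventually.of_forall hRHS
    _ ≤ M * A := by
        rw [hν, Measure.restrict_apply_univ, Real.volume_Ioc, sub_zero,
          ENNReal.toReal_ofReal hM, mul_comm]

lemma core_lemma (h g : ℝ → ℝ) (β γ lam : ℝ) (hβγ : β ≤ γ) (hlam : 0 < lam)
    (hderiv : ∀ y ∈ Icc β γ, HasDerivAt h (g y) y)
    (hgcont : ContinuousOn g (Icc β γ))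
    (hgmono : MonotoneOn g (Icc β γ) ∨ AntitoneOn g (Icc β γ))
    (hgpos : ∀ y ∈ Icc β γ, lam ≤ g y) :
    ‖∫ y in β..γ, Complex.exp (Complex.I * (h y : ℂ))‖ ≤ 2 / lam := by
  have hhcont : ContinuousOn h (Icc β γ) :=
    fun y hy => ((hderiv y hy).continuousAt).continuousWithinAt
  set f : ℝ → ℂ := fun y => g y • Complex.exp (Complex.I * (h y : ℂ)) with hf
  set Ψ : ℝ → ℝ := fun y => (g ((projIcc β γ hβγ y) : ℝ))⁻¹ with hΨ
  have hproj_mem : ∀ y : ℝ, ((projIcc β γ hβγ y : ℝ)) ∈ Icc β γ := fun y => (projIcc β γ hβγ y).2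
  have hΨ0 : ∀ y, 0 ≤ Ψ y := fun y =>
    le_of_lt (inv_pos.mpr (lt_of_lt_of_le hlam (hgpos _ (hproj_mem y))))
  have hΨM : ∀ y, Ψ y ≤ lam⁻¹ := fun y =>
    inv_anti₀ hlam (hgpos _ (hproj_mem y))
  have hΨmono : Monotone Ψ ∨ Antitone Ψ := by
    rcases hgmono with hm | hm
    · right
      intro x y hxy
      exact inv_anti₀ (lt_of_lt_of_le hlam (hgpos _ (hproj_mem x)))
        (hm (hproj_mem x) (hproj_mem y) (monotone_projIcc hβγ hxy))
    · left
      intro x y hxy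
      exact inv_anti₀ (lt_of_lt_of_le hlam (hgpos _ (hproj_mem y)))
        (hm (hproj_mem x) (hproj_mem y) (monotone_projIcc hβγ hxy))
  have hfcont : ContinuousOn f (Icc β γ) := by
    apply hgcont.smul
    apply ContinuousOn.cexp
    exact (continuousOn_const.mul (Complex.continuous_ofReal.comp_continuousOn hhcont))
  have hbound : ∀ c d, c ∈ Icc β γ → d ∈ Icc β γ → ‖∫ y in c..d, f y‖ ≤ 2 := by
    intro c d hc hd
    have hsub : uIcc c d ⊆ Icc β γ := uIcc_subset_Icc hc hd
    have hFTC : ∫ y in c..d, f y =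
        (-Complex.I) * Complex.exp (Complex.I * (h d : ℂ))
          - (-Complex.I) * Complex.exp (Complex.I * (h c : ℂ)) := by
      apply intervalIntegral.integral_eq_sub_of_hasDerivAt
      · intro y hy
        have h1 : HasDerivAt (fun x => (h x : ℂ)) ((g y : ℂ)) y :=
          (hderiv y (hsub hy)).ofReal_comp
        have h2 : HasDerivAt (fun x => Complex.I * (h x : ℂ)) (Complex.I * g y) y :=
          h1.const_mul Complex.I
        have h3 := h2.cexp
        have h4 := h3.const_mul (-Complex.I)
        convert h4 using 1
        · rfl
        rw [hf]
        show (g y : ℝ) • Complex.exp (Complex.I * (h y : ℂ))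
          = -Complex.I * (Complex.exp (Complex.I * (h y : ℂ)) * (Complex.I * (g y : ℂ)))
        rw [Complex.real_smul]
        linear_combination ((g y : ℂ) * Complex.exp (Complex.I * (h y : ℂ))) * Complex.I_mul_I
      · exact (hfcont.mono hsub).intervalIntegrable
    rw [hFTC]
    have hnorm : ∀ t : ℝ, ‖(-Complex.I) * Complex.exp (Complex.I * (t : ℂ))‖ = 1 := by
      intro t
      rw [norm_mul, norm_neg, Complex.norm_I, one_mul, mul_comm,
        Complex.norm_exp_ofReal_mul_I]
    calc ‖_ - _‖ ≤ ‖(-Complex.I) * Complex.exp (Complex.I * (h d : ℂ))‖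
          + ‖(-Complex.I) * Complex.exp (Complex.I * (h c : ℂ))‖ := norm_sub_le _ _
      _ ≤ 2 := by rw [hnorm, hnorm]; norm_num
  have heq : ∫ y in β..γ, Complex.exp (Complex.I * (h y : ℂ)) = ∫ y in β..γ, Ψ y • f y := by
    apply intervalIntegral.integral_congr
    intro y hy
    rw [uIcc_of_le hβγ] at hy
    have hg0 : g y ≠ 0 := ne_of_gt (lt_of_lt_of_le hlam (hgpos y hy))
    rw [hΨ, hf]
    simp only [projIcc_of_mem hβγ hy]
    rw [smul_smul, inv_mul_cancel₀ hg0, one_smul]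
  rw [heq]
  calc ‖∫ y in β..γ, Ψ y • f y‖ ≤ lam⁻¹ * 2 :=
      key_lemma Ψ f β γ lam⁻¹ 2 hβγ (le_of_lt (inv_pos.mpr hlam)) hΨmono hΨ0 hΨM hfcont hbound
    _ = 2 / lam := by field_simp

theorem stmt_15 :
    ∃ C > 0, ∀ (h : ℝ → ℝ) (β γ lam : ℝ), β ≤ γ →
      ContDiffOn ℝ 1 h (Set.Icc β γ) →
      (ConvexOn ℝ (Set.Icc β γ) h ∨ ConcaveOn ℝ (Set.Icc β γ) h) →
      0 < lam → (∀ y ∈ Set.Icc β γ, lam ≤ |deriv h y|) →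
      ‖∫ y in β..γ, Complex.exp (Complex.I * (h y : ℂ))‖ ≤ C / lam := by
  refine ⟨2, by norm_num, ?_⟩
  intro h β γ lam hβγ hC1 hconv hlam habs
  rcases eq_or_lt_of_le hβγ with rfl | hlt
  · rw [intervalIntegral.integral_same, norm_zero]
    positivity
  -- differentiability everywhere on Icc
  have hdiff : ∀ y ∈ Icc β γ, DifferentiableAt ℝ h y := by
    intro y hy
    by_contra hnd
    have := habs y hy
    rw [deriv_zero_of_not_differentiableAt hnd] at this
    simp only [abs_zero] at this
    linarith
  have hhas : ∀ y ∈ Icc β γ, HasDerivAt h (deriv h y) y :=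
    fun y hy => (hdiff y hy).hasDerivAt
  -- continuity of deriv h on Icc
  have hudiff : UniqueDiffOn ℝ (Icc β γ) := uniqueDiffOn_Icc hlt
  have hdcont : ContinuousOn (deriv h) (Icc β γ) := by
    apply (hC1.continuousOn_derivWithin hudiff le_rfl).congr
    intro y hy
    exact ((hdiff y hy).derivWithin (hudiff y hy)).symm
  -- monotonicity of deriv h on Icc
  have hmono : MonotoneOn (deriv h) (Icc β γ) ∨ AntitoneOn (deriv h) (Icc β γ) := by
    rcases hconv with hc | hc
    · exact Or.inl (hc.monotoneOn_deriv hdiff)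
    · exact Or.inr (hc.antitoneOn_deriv hdiff)
  -- sign analysis
  have hβmem : β ∈ Icc β γ := ⟨le_refl β, hβγ⟩
  have hnz : ∀ y ∈ Icc β γ, deriv h y ≠ 0 := by
    intro y hy h0
    have := habs y hy
    rw [h0, abs_zero] at this
    linarith
  by_cases hpos : 0 < deriv h β
  · -- positive derivative throughout
    have hgpos : ∀ y ∈ Icc β γ, lam ≤ deriv h y := by
      intro y hy
      have hy0 : 0 < deriv h y := by
        by_contra hne
        push_neg at hne
        have h0mem : (0 : ℝ) ∈ uIcc (deriv h β) (deriv h y) := by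
          rw [Set.mem_uIcc]
          right
          exact ⟨hne, le_of_lt hpos⟩
        have hsub : uIcc β y ⊆ Icc β γ := uIcc_subset_Icc hβmem hy
        obtain ⟨c, hc, hc0⟩ := intermediate_value_uIcc (hdcont.mono hsub) h0mem
        exact hnz c (hsub hc) hc0
      have := habs y hy
      rwa [abs_of_pos hy0] at this
    exact core_lemma h (deriv h) β γ lam hβγ hlam hhas hdcont hmono hgpos
  · -- negative derivative throughout; conjugate
    have hβneg : deriv h β < 0 := lt_of_le_of_ne (not_lt.mp hpos) (hnz β hβmem)
    have hgpos : ∀ y ∈ Icc β γ, lam ≤ -(deriv h y) := by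
      intro y hy
      have hy0 : deriv h y < 0 := by
        by_contra hne
        push_neg at hne
        have h0mem : (0 : ℝ) ∈ uIcc (deriv h β) (deriv h y) := by
          rw [Set.mem_uIcc]
          left
          exact ⟨le_of_lt hβneg, hne⟩
        have hsub : uIcc β y ⊆ Icc β γ := uIcc_subset_Icc hβmem hy
        obtain ⟨c, hc, hc0⟩ := intermediate_value_uIcc (hdcont.mono hsub) h0mem
        exact hnz c (hsub hc) hc0
      have := habs y hy
      rwa [abs_of_neg hy0] at this
    have hkey := core_lemma (fun y => -h y) (fun y => -(deriv h y)) β γ lam hβγ hlam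
      (fun y hy => (hhas y hy).neg) hdcont.neg
      (by rcases hmono with hm | hm
          · exact Or.inr (fun x hx y hy hxy => neg_le_neg (hm hx hy hxy))
          · exact Or.inl (fun x hx y hy hxy => neg_le_neg (hm hx hy hxy)))
      hgpos
    have hconj : (starRingEnd ℂ) (∫ y in β..γ, Complex.exp (Complex.I * (h y : ℂ)))
        = ∫ y in β..γ, Complex.exp (Complex.I * ((-h y : ℝ) : ℂ)) := by
      rw [intervalIntegral.integral_of_le hβγ, intervalIntegral.integral_of_le hβγ,
        ← integral_conj]
      apply MeasureTheory.integral_congr_ae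
      filter_upwards with y
      rw [← Complex.exp_conj]
      congr 1
      simp [Complex.conj_ofReal]
    calc ‖∫ y in β..γ, Complex.exp (Complex.I * (h y : ℂ))‖
        = ‖(starRingEnd ℂ) (∫ y in β..γ, Complex.exp (Complex.I * (h y : ℂ)))‖ :=
          (RCLike.norm_conj _).symm
      _ = ‖∫ y in β..γ, Complex.exp (Complex.I * ((-h y : ℝ) : ℂ))‖ := by rw [hconj]
      _ ≤ 2 / lam := hkey
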